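/- Let N+ be a rooted binary phylogenetic network on taxon set X with {a,b,c,d} a B-quartet, and let α ∈ X ∖ {a,b,c,d}. Let A be the subnetwork of N+ whose edges are those ancestral to the taxon α but to no other taxon, and let N' be the subnetwork whose edges are those ancestral to at least one taxon other than α. Suppose e0 is a cut edge of N' whose deletion leaves a, b in one connected component K_ab and c, d in the other component K_cd. Then there is an undirected path lying entirely within A from the leaf α to a node of K_ab, and there is also an undirected path lying entirely within A from α to a node of K_cd. -/

import Mathlib

/-!
# Common framework

Finite directed multigraphs, undirected connectivity, numbers of connected
components, cut edges, subgraphs, blobs, blobs determined by leaf sets,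
B-quartets, and quartets displayed via cut-edge separation.

A *network* is modelled as a finite directed multigraph (edge directions are
simply ignored for the undirected notions of connectivity, cut edges and
blobs).
-/

/-- A finite directed multigraph: finite types of nodes and of edges, with
source and target maps. -/
structure MDigraph where
  V : Type
  E : Type
  finV : Finite V
  finE : Finite E
  src : E → V
  tgt : E → V

attribute [instance] MDigraph.finV MDigraph.finE

namespace MDigraph

section Basic

variable (G : MDigraph)

/-- One undirected step between `u` and `v` along an edge from the set `F`. -/
def Step (F : Set G.E) (u v : G.V) : Prop :=
  ∃ e ∈ F, (G.src e = u ∧ G.tgt e = v) ∨ (G.src e = v ∧ G.tgt e = u)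

/-- Undirected reachability (an undirected path) using only edges in `F`. -/
def Conn (F : Set G.E) (u v : G.V) : Prop :=
  Relation.ReflTransGen (G.Step F) u v

/-- One directed step from `u` to `v` along an edge from the set `F`. -/
def DStep (F : Set G.E) (u v : G.V) : Prop :=
  ∃ e ∈ F, G.src e = u ∧ G.tgt e = v

/-- Directed reachability (a directed path) using only edges in `F`. -/
def DConn (F : Set G.E) (u v : G.V) : Prop :=
  Relation.ReflTransGen (G.DStep F) u v

/-- `u` is above (ancestral to) `v`: there is a directed path from `u` to `v`. -/
def Above (u v : G.V) : Prop := G.DConn Set.univ u v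

/-- In-degree of a node. -/
noncomputable def inDeg (v : G.V) : ℕ := Nat.card {e : G.E // G.tgt e = v}

/-- Out-degree of a node. -/
noncomputable def outDeg (v : G.V) : ℕ := Nat.card {e : G.E // G.src e = v}

/-- Undirected degree of a node (a loop counts twice). -/
noncomputable def degree (v : G.V) : ℕ := G.inDeg v + G.outDeg v

/-- The number of connected components of the graph with node set `W` and edge
set the restriction to `W` of `F` (two nodes of `W` lie in the same connected
component iff they are joined by an undirected path). -/
noncomputable def numComponents (W : Set G.V) (F : Set G.E) : ℕ :=
  Nat.card (Quot (fun u v : W => G.Step {e ∈ F | G.src e ∈ W ∧ G.tgt e ∈ W} u.1 v.1))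

/-- `v` lies on every directed path from `u` to `w`: there is no directed path
from `u` to `w` all of whose nodes avoid `v`. -/
def OnEveryPath (v u w : G.V) : Prop :=
  ¬ (u ≠ v ∧ w ≠ v ∧
      Relation.ReflTransGen (fun a b => G.DStep Set.univ a b ∧ a ≠ v ∧ b ≠ v) u w)

end Basic

/-- A subgraph (subnetwork): a set of nodes together with a set of edges
joining them. -/
structure Subgraph (G : MDigraph) where
  verts : Set G.V
  edges : Set G.E
  src_mem : ∀ e ∈ edges, G.src e ∈ verts
  tgt_mem : ∀ e ∈ edges, G.tgt e ∈ verts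

/-- The whole graph, as a subgraph of itself. -/
def top (G : MDigraph) : Subgraph G :=
  ⟨Set.univ, Set.univ, fun _ _ => Set.mem_univ _, fun _ _ => Set.mem_univ _⟩

namespace Subgraph

variable {G : MDigraph}

/-- Containment of subgraphs. -/
def le (H K : Subgraph G) : Prop := H.verts ⊆ K.verts ∧ H.edges ⊆ K.edges

/-- The subgraph `H` is connected. -/
def IsConnected (H : Subgraph G) : Prop :=
  H.verts.Nonempty ∧ ∀ u ∈ H.verts, ∀ v ∈ H.verts, G.Conn H.edges u v

/-- Delete an edge from a subgraph. -/
def deleteEdge (H : Subgraph G) (e : G.E) : Subgraph G :=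
  ⟨H.verts, H.edges \ {e}, fun e' he' => H.src_mem e' he'.1,
    fun e' he' => H.tgt_mem e' he'.1⟩

/-- The number of connected components of a subgraph. -/
noncomputable def numComponents (H : Subgraph G) : ℕ :=
  G.numComponents H.verts H.edges

/-- `e` is a cut edge of the (sub)graph `H`: deleting it increases the number
of connected components. -/
def IsCutEdge (H : Subgraph G) (e : G.E) : Prop :=
  e ∈ H.edges ∧ H.numComponents < (H.deleteEdge e).numComponents

end Subgraph

variable {G : MDigraph}

/-- `B` is a blob of the network `H`: a maximal connected subnetwork of `H`
having no cut edges.  (A blob is *trivial* if it consists of a single node.) -/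
def IsBlobIn (H B : Subgraph G) : Prop :=
  B.le H ∧ B.IsConnected ∧ (∀ e, ¬ B.IsCutEdge e) ∧
    ∀ B' : Subgraph G, B'.le H → B'.IsConnected → (∀ e, ¬ B'.IsCutEdge e) →
      B.le B' → B'.le B

/-- `e` is a cut edge of the network `H` incident to the blob `B`: exactly one
of its endpoints is a node of `B`. -/
def IncidentCut (H B : Subgraph G) (e : G.E) : Prop :=
  H.IsCutEdge e ∧ Xor' (G.src e ∈ B.verts) (G.tgt e ∈ B.verts)

/-- The blob `B` of the network `H` is determined by the set `S` of leaf
labels: deletion of the cut edges of `H` incident to `B` leaves the nodes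
labelled by the elements of `S` in distinct connected components. -/
def DeterminesIn {X : Type} (H B : Subgraph G) (leaf : X → G.V) (S : Set X) : Prop :=
  ∀ s ∈ S, ∀ t ∈ S, s ≠ t →
    ¬ G.Conn {e ∈ H.edges | ¬ IncidentCut H B e} (leaf s) (leaf t)

/-- Four taxa form a B-quartet on the network `H`: some blob of `H` is
determined by them. -/
def BQuartetIn {X : Type} (H : Subgraph G) (leaf : X → G.V) (a b c d : X) : Prop :=
  ∃ B : Subgraph G, IsBlobIn H B ∧ DeterminesIn H B leaf ({a, b, c, d} : Set X)

/-- Some cut edge of `H` separates the taxa `p, q` from the taxa `r, s`: after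
its deletion `p, q` lie in one connected component and `r, s` in another.  For
a 4-taxon set `{p,q,r,s}` this says exactly that the (reduced unrooted) tree of
blobs of `H` displays the resolved quartet `pq|rs` (the edges of the tree of
blobs correspond exactly to the cut edges of the network, and suppressing
degree-2 nodes or contracting blobs does not affect which taxa a cut edge
separates). -/
def CutSep {X : Type} (H : Subgraph G) (leaf : X → G.V) (p q r s : X) : Prop :=
  ∃ e, H.IsCutEdge e ∧
    G.Conn (H.edges \ {e}) (leaf p) (leaf q) ∧
    G.Conn (H.edges \ {e}) (leaf r) (leaf s) ∧
    ¬ G.Conn (H.edges \ {e}) (leaf p) (leaf r)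

end MDigraph
open MDigraph in
/-- A rooted binary phylogenetic network on the taxon set `X`: a connected
directed acyclic graph whose node set consists of a root (in-degree 0,
out-degree 2), leaves (in-degree 1, out-degree 0) bijectively labelled by `X`,
tree nodes (in-degree 1, out-degree 2) and hybrid nodes (in-degree 2,
out-degree 1). -/
structure PhyloNetwork (X : Type) extends MDigraph where
  root : toMDigraph.V
  leaf : X → toMDigraph.V
  leaf_inj : Function.Injective leaf
  root_in : toMDigraph.inDeg root = 0
  root_out : toMDigraph.outDeg root = 2
  leaf_in : ∀ x, toMDigraph.inDeg (leaf x) = 1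
  leaf_out : ∀ x, toMDigraph.outDeg (leaf x) = 0
  internal : ∀ v, v ≠ root → (∀ x, v ≠ leaf x) →
      (toMDigraph.inDeg v = 1 ∧ toMDigraph.outDeg v = 2) ∨
      (toMDigraph.inDeg v = 2 ∧ toMDigraph.outDeg v = 1)
  acyclic : ∀ v, ¬ Relation.TransGen (toMDigraph.DStep Set.univ) v v
  conn : ∀ u v, toMDigraph.Conn Set.univ u v

namespace PhyloNetwork

open MDigraph

variable {X : Type} (N : PhyloNetwork X)

/-- The subnetwork of `N⁺` consisting of all nodes and edges ancestral to at
least one taxon in `Y`.  Since suppressing nodes of in- and out-degree 1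
affects neither blobs, nor cut edges, nor which sets of taxa they separate,
this subnetwork faithfully represents the induced network `N⁺_Y`. -/
def inducedSub (Y : Set X) : Subgraph N.toMDigraph where
  verts := {v | ∃ y ∈ Y, N.toMDigraph.Above v (N.leaf y)}
  edges := {e | ∃ y ∈ Y, N.toMDigraph.Above (N.toMDigraph.tgt e) (N.leaf y)}
  src_mem := by
    rintro e ⟨y, hy, h⟩
    exact ⟨y, hy, Relation.ReflTransGen.head ⟨e, Set.mem_univ e, rfl, rfl⟩ h⟩
  tgt_mem := by
    rintro e ⟨y, hy, h⟩
    exact ⟨y, hy, h⟩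

/-- `v` is a stable ancestor of the leaves: it is ancestral to every leaf and
lies on every directed path from the root to any leaf. -/
def IsStableAncestor (v : N.toMDigraph.V) : Prop :=
  (∀ x, N.toMDigraph.Above v (N.leaf x)) ∧
  ∀ x, N.toMDigraph.OnEveryPath v N.root (N.leaf x)

/-- `v` is the lowest stable ancestor (LSA) of the network: a stable ancestor
below all stable ancestors. -/
def IsLSA (v : N.toMDigraph.V) : Prop :=
  N.IsStableAncestor v ∧ ∀ u, N.IsStableAncestor u → N.toMDigraph.Above u v

/-- The number of cut edges of `N⁺` incident to the blob `B`. -/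
noncomputable def blobDeg (B : Subgraph N.toMDigraph) : ℕ :=
  Nat.card {e : N.toMDigraph.E // IncidentCut (top N.toMDigraph) B e}

/-- `B` is an `m`-blob of the rooted network `N⁺`: if the root is not in `B`
then `B` has exactly `m` incident cut edges, while if the root is in `B` then
`B` has exactly `m - 1` incident cut edges. -/
def IsMBlob (B : Subgraph N.toMDigraph) (m : ℕ) : Prop :=
  IsBlobIn (top N.toMDigraph) B ∧
    ((N.root ∈ B.verts ∧ m = N.blobDeg B + 1) ∨ (N.root ∉ B.verts ∧ m = N.blobDeg B))

end PhyloNetwork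

open MDigraph

namespace MDigraph

variable {G : MDigraph}

theorem Step.symm {F : Set G.E} {u v : G.V} (h : G.Step F u v) : G.Step F v u := by
  obtain ⟨e, he, h⟩ := h; exact ⟨e, he, h.symm⟩

theorem Conn.refl {F : Set G.E} {u : G.V} : G.Conn F u u := Relation.ReflTransGen.refl

theorem Conn.symm {F : Set G.E} {u v : G.V} (h : G.Conn F u v) : G.Conn F v u :=
  (@Relation.ReflTransGen.stdSymm _ (G.Step F) ⟨fun _ _ hs => Step.symm hs⟩).symm _ _ h

theorem Conn.trans {F : Set G.E} {u v w : G.V} (h : G.Conn F u v) (h' : G.Conn F v w) :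
    G.Conn F u w := Relation.ReflTransGen.trans h h'

theorem Conn.mono {F F' : Set G.E} (hFF : F ⊆ F') {u v : G.V} (h : G.Conn F u v) :
    G.Conn F' u v :=
  Relation.ReflTransGen.mono (r := G.Step F) (p := G.Step F')
    (fun _ _ h => by obtain ⟨e, he, h⟩ := h; exact ⟨e, hFF he, h⟩) _ _ h

/-- Crossing lemma: a path either stays within the `P`-edges, or has a first
non-`P` edge, reached from `u` by `P`-edges. -/
theorem crossing {F : Set G.E} (P : G.E → Prop) {u v : G.V} (h : G.Conn F u v) :
    G.Conn {e ∈ F | P e} u v ∨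
    ∃ w₁ w₂ e, G.Conn {e ∈ F | P e} u w₁ ∧ e ∈ F ∧ ¬ P e ∧
      ((G.src e = w₁ ∧ G.tgt e = w₂) ∨ (G.src e = w₂ ∧ G.tgt e = w₁)) := by
  have h' : Relation.ReflTransGen (G.Step F) u v := h
  clear h
  induction h' using Relation.ReflTransGen.head_induction_on with
  | refl => exact Or.inl Relation.ReflTransGen.refl
  | head hstep _ ih =>
    obtain ⟨e, he, hor⟩ := hstep
    by_cases hP : P e
    · rcases ih with h1 | ⟨w₁, w₂, e', h1, h2, h3, h4⟩
      · exact Or.inl (Relation.ReflTransGen.head ⟨e, ⟨he, hP⟩, hor⟩ h1)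
      · exact Or.inr ⟨w₁, w₂, e', Relation.ReflTransGen.head ⟨e, ⟨he, hP⟩, hor⟩ h1, h2, h3, h4⟩
    · exact Or.inr ⟨_, _, e, Relation.ReflTransGen.refl, he, hP, hor⟩

/-- Deleting a non-cut edge of a connected subgraph keeps any two of its
vertices connected. -/
theorem conn_delete_of_not_cut (H : Subgraph G) (hconn : H.IsConnected)
    (e₀ : G.E) (hnc : ¬ H.IsCutEdge e₀) {u v : G.V} (hu : u ∈ H.verts) (hv : v ∈ H.verts) :
    G.Conn (H.edges \ {e₀}) u v := by
  by_cases he₀ : e₀ ∈ H.edges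
  case neg =>
    refine (hconn.2 u hu v hv).mono fun e he => Set.mem_diff_of_mem he fun h => ?_
    rw [Set.mem_singleton_iff] at h
    subst h
    exact he₀ he
  set W := H.verts with hW
  let r₁ : W → W → Prop := fun a b =>
    G.Step {e ∈ H.edges \ {e₀} | G.src e ∈ W ∧ G.tgt e ∈ W} a.1 b.1
  let r₂ : W → W → Prop := fun a b =>
    G.Step {e ∈ H.edges | G.src e ∈ W ∧ G.tgt e ∈ W} a.1 b.1
  have hr12 : ∀ a b : W, r₁ a b → r₂ a b := by
    rintro a b ⟨e, ⟨⟨he, -⟩, hm⟩, hor⟩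
    exact ⟨e, ⟨he, hm⟩, hor⟩
  let f : Quot r₁ → Quot r₂ :=
    Quot.lift (fun x => Quot.mk r₂ x) (fun a b h => Quot.sound (hr12 a b h))
  have hsurj : Function.Surjective f := by
    intro q
    exact @Quot.ind _ r₂ (fun q => ∃ x, f x = q) (fun x => ⟨Quot.mk r₁ x, rfl⟩) q
  have hle1 : Nat.card (Quot r₂) ≤ Nat.card (Quot r₁) :=
    Nat.card_le_card_of_surjective f hsurj
  have hle2 : Nat.card (Quot r₁) ≤ Nat.card (Quot r₂) := by
    have hnlt : ¬ H.numComponents < (H.deleteEdge e₀).numComponents := fun hlt => hnc ⟨he₀, hlt⟩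
    exact Nat.not_lt.mp hnlt
  have hbij : Function.Bijective f :=
    (Nat.bijective_iff_surjective_and_card f).mpr ⟨hsurj, le_antisymm hle2 hle1⟩
  have key : ∀ {x y : G.V}, G.Conn H.edges x y → ∀ (hx : x ∈ W) (hy : y ∈ W),
      Quot.mk r₂ ⟨x, hx⟩ = Quot.mk r₂ ⟨y, hy⟩ := by
    intro x y h
    have h' : Relation.ReflTransGen (G.Step H.edges) x y := h
    clear h
    induction h' with
    | refl => intro hx hy; rfl
    | @tail m z _ hstep ih =>
      intro hx hz
      obtain ⟨e, he, hor⟩ := hstep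
      have hm1 : G.src e ∈ W := H.src_mem e he
      have hm2 : G.tgt e ∈ W := H.tgt_mem e he
      have hmid : m ∈ W := by
        rcases hor with ⟨h1, -⟩ | ⟨-, h2⟩
        · exact h1 ▸ hm1
        · exact h2 ▸ hm2
      exact (ih hx hmid).trans (Quot.sound ⟨e, ⟨he, hm1, hm2⟩, hor⟩)
  have hq : Quot.mk r₁ ⟨u, hu⟩ = Quot.mk r₁ ⟨v, hv⟩ := by
    apply hbij.1
    exact key (hconn.2 u hu v hv) hu hv
  have heq := Quot.eq.mp hq
  have final : ∀ {x y : W}, Relation.EqvGen r₁ x y → G.Conn (H.edges \ {e₀}) x.1 y.1 := by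
    intro x y h
    induction h with
    | rel _ _ h =>
      obtain ⟨e, ⟨he, -⟩, hor⟩ := h
      exact Relation.ReflTransGen.single ⟨e, he, hor⟩
    | refl _ => exact Conn.refl
    | symm _ _ _ ih => exact ih.symm
    | trans _ _ _ _ _ ih1 ih2 => exact ih1.trans ih2
  exact final heq

end MDigraph

namespace PhyloNetwork

open MDigraph

variable {X : Type} (N : PhyloNetwork X)

theorem exists_above_leaf (v : N.toMDigraph.V) :
    ∃ y, N.toMDigraph.Above v (N.leaf y) := by
  let r : N.toMDigraph.V → N.toMDigraph.V → Prop :=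
    fun w v => Relation.TransGen (N.toMDigraph.DStep Set.univ) v w
  haveI : IsTrans _ r := ⟨fun _ _ _ h1 h2 => h2.trans h1⟩
  haveI : IsIrrefl _ r := ⟨fun a h => N.acyclic a h⟩
  have wf := Finite.wellFounded_of_trans_of_irrefl r
  refine wf.induction (C := fun v => ∃ y, N.toMDigraph.Above v (N.leaf y)) v ?_
  intro v ih
  by_cases hout : N.toMDigraph.outDeg v = 0
  · have hleaf : ∃ x, v = N.leaf x := by
      by_contra hno
      push_neg at hno
      by_cases hroot : v = N.root
      · rw [hroot, N.root_out] at hout; omega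
      · rcases N.internal v hroot hno with ⟨-, h2⟩ | ⟨-, h2⟩ <;> omega
    obtain ⟨x, hx⟩ := hleaf
    exact ⟨x, hx ▸ Relation.ReflTransGen.refl⟩
  · have hne : Nonempty {e : N.toMDigraph.E // N.toMDigraph.src e = v} := by
      have h : Nat.card {e : N.toMDigraph.E // N.toMDigraph.src e = v} ≠ 0 := hout
      exact (Nat.card_ne_zero.mp h).1
    obtain ⟨⟨e, he⟩⟩ := hne
    have hstep : N.toMDigraph.DStep Set.univ v (N.toMDigraph.tgt e) :=
      ⟨e, Set.mem_univ e, he, rfl⟩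
    obtain ⟨y, hy⟩ := ih (N.toMDigraph.tgt e) (Relation.TransGen.single hstep)
    exact ⟨y, Relation.ReflTransGen.head hstep hy⟩

theorem conn_A (α : X) {u : N.toMDigraph.V}
    (h1 : N.toMDigraph.Above u (N.leaf α))
    (h2 : ∀ x, x ≠ α → ¬ N.toMDigraph.Above u (N.leaf x)) :
    N.toMDigraph.Conn
      {e | N.toMDigraph.Above (N.toMDigraph.tgt e) (N.leaf α) ∧
        ∀ x, x ≠ α → ¬ N.toMDigraph.Above (N.toMDigraph.tgt e) (N.leaf x)}
      u (N.leaf α) := by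
  have h1' : Relation.ReflTransGen (N.toMDigraph.DStep Set.univ) u (N.leaf α) := h1
  clear h1
  revert h2
  induction h1' using Relation.ReflTransGen.head_induction_on with
  | refl => intro _; exact Relation.ReflTransGen.refl
  | @head p m hstep hrest ih =>
    intro hp2
    obtain ⟨e, -, hsrc, htgt⟩ := hstep
    have hstep' : N.toMDigraph.DStep Set.univ p m := ⟨e, Set.mem_univ e, hsrc, htgt⟩
    have hm2 : ∀ x, x ≠ α → ¬ N.toMDigraph.Above m (N.leaf x) := fun x hx hax =>
      hp2 x hx (Relation.ReflTransGen.head hstep' hax)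
    have hm1 : N.toMDigraph.Above m (N.leaf α) := hrest
    have heA : N.toMDigraph.Above (N.toMDigraph.tgt e) (N.leaf α) ∧
        ∀ x, x ≠ α → ¬ N.toMDigraph.Above (N.toMDigraph.tgt e) (N.leaf x) :=
      ⟨htgt ▸ hm1, htgt ▸ hm2⟩
    exact Relation.ReflTransGen.head ⟨e, heA, Or.inl ⟨hsrc, htgt⟩⟩ (ih hm2)

end PhyloNetwork

/-- Let `N⁺` be a rooted binary phylogenetic network on taxon set `X` with
`{a,b,c,d}` a B-quartet, and `α ∈ X ∖ {a,b,c,d}`.  Let `A` be the subnetwork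
of `N⁺` whose edges are those ancestral to the taxon `α` but to no other
taxon, and let `N'` be the subnetwork whose edges are those ancestral to at
least one taxon other than `α`.  Suppose `e₀` is a cut edge of `N'` whose
deletion leaves `a, b` in one connected component `K_ab` and `c, d` in the
other component `K_cd`.  Then there is an undirected path lying entirely
within `A` from the leaf `α` to a node of `K_ab`, and there is also an
undirected path lying entirely within `A` from `α` to a node of `K_cd`. -/
theorem stmt_18 {X : Type} (N : PhyloNetwork X) (a b c d α : X)
    (hpair : List.Pairwise (· ≠ ·) [a, b, c, d, α])
    (hB : BQuartetIn (top N.toMDigraph) N.leaf a b c d)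
    (e₀ : N.toMDigraph.E)
    (hcut : (N.inducedSub {x | x ≠ α}).IsCutEdge e₀)
    (hab : N.toMDigraph.Conn ((N.inducedSub {x | x ≠ α}).edges \ {e₀})
      (N.leaf a) (N.leaf b))
    (hcd : N.toMDigraph.Conn ((N.inducedSub {x | x ≠ α}).edges \ {e₀})
      (N.leaf c) (N.leaf d))
    (hac : ¬ N.toMDigraph.Conn ((N.inducedSub {x | x ≠ α}).edges \ {e₀})
      (N.leaf a) (N.leaf c)) :
    (∃ v, N.toMDigraph.Conn
        {e | N.toMDigraph.Above (N.toMDigraph.tgt e) (N.leaf α) ∧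
          ∀ x, x ≠ α → ¬ N.toMDigraph.Above (N.toMDigraph.tgt e) (N.leaf x)}
        (N.leaf α) v ∧
      N.toMDigraph.Conn ((N.inducedSub {x | x ≠ α}).edges \ {e₀}) v (N.leaf a)) ∧
    (∃ v, N.toMDigraph.Conn
        {e | N.toMDigraph.Above (N.toMDigraph.tgt e) (N.leaf α) ∧
          ∀ x, x ≠ α → ¬ N.toMDigraph.Above (N.toMDigraph.tgt e) (N.leaf x)}
        (N.leaf α) v ∧
      N.toMDigraph.Conn ((N.inducedSub {x | x ≠ α}).edges \ {e₀}) v (N.leaf c)) := by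
  classical
  obtain ⟨B, hblob, hdet⟩ := hB
  obtain ⟨hpa, hpair2⟩ := List.pairwise_cons.mp hpair
  obtain ⟨hpb, hpair3⟩ := List.pairwise_cons.mp hpair2
  obtain ⟨hpc, -⟩ := List.pairwise_cons.mp hpair3
  have hab' : a ≠ b := hpa b (by simp)
  have hcd' : c ≠ d := hpc d (by simp)
  set Aset : Set N.toMDigraph.E :=
    {e | N.toMDigraph.Above (N.toMDigraph.tgt e) (N.leaf α) ∧
      ∀ x, x ≠ α → ¬ N.toMDigraph.Above (N.toMDigraph.tgt e) (N.leaf x)} with hAset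
  set F' : Set N.toMDigraph.E := (N.inducedSub {x | x ≠ α}).edges \ {e₀} with hF'
  -- from a path between two of the four taxa in F', find a node of B reachable from the first
  have getw : ∀ p q : X, p ∈ ({a, b, c, d} : Set X) → q ∈ ({a, b, c, d} : Set X) → p ≠ q →
      N.toMDigraph.Conn F' (N.leaf p) (N.leaf q) →
      ∃ w ∈ B.verts, N.toMDigraph.Conn F' (N.leaf p) w := by
    intro p q hp hq hpq hconn
    rcases MDigraph.crossing (fun e => ¬ IncidentCut (top N.toMDigraph) B e) hconn with
      h1 | ⟨w₁, w₂, e₁, h1, h2, h3, h4⟩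
    · have hsub : {e ∈ F' | ¬ IncidentCut (top N.toMDigraph) B e} ⊆
          {e ∈ (top N.toMDigraph).edges | ¬ IncidentCut (top N.toMDigraph) B e} := by
        rintro e ⟨-, h⟩
        exact ⟨Set.mem_univ e, h⟩
      exact absurd (h1.mono hsub) (hdet p hp q hq hpq)
    · have hinc : IncidentCut (top N.toMDigraph) B e₁ := not_not.mp h3
      have hsub : {e ∈ F' | ¬ IncidentCut (top N.toMDigraph) B e} ⊆ F' := by
        rintro e ⟨h, -⟩; exact h
      have hcw₁ : N.toMDigraph.Conn F' (N.leaf p) w₁ := h1.mono hsub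
      have hcw₂ : N.toMDigraph.Conn F' (N.leaf p) w₂ :=
        Relation.ReflTransGen.tail hcw₁ ⟨e₁, h2, h4⟩
      rcases hinc.2 with ⟨hs, -⟩ | ⟨ht, -⟩
      · rcases h4 with ⟨h5, h6⟩ | ⟨h5, h6⟩
        · exact ⟨w₁, h5 ▸ hs, hcw₁⟩
        · exact ⟨w₂, h5 ▸ hs, hcw₂⟩
      · rcases h4 with ⟨h5, h6⟩ | ⟨h5, h6⟩
        · exact ⟨w₂, h6 ▸ ht, hcw₂⟩
        · exact ⟨w₁, h6 ▸ ht, hcw₁⟩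
  obtain ⟨w, hwB, hwa⟩ := getw a b (by simp) (by simp) hab' hab
  obtain ⟨w', hw'B, hw'c⟩ := getw c d (by simp) (by simp) hcd' hcd
  have hww' : N.toMDigraph.Conn (B.edges \ {e₀}) w w' :=
    MDigraph.conn_delete_of_not_cut B hblob.2.1 e₀ (hblob.2.2.1 e₀) hwB hw'B
  have hsubF : F' ⊆ Set.univ \ {e₀} := by
    rintro e ⟨-, h⟩; exact ⟨Set.mem_univ e, h⟩
  have hsubB : B.edges \ {e₀} ⊆ Set.univ \ {e₀} := by
    rintro e ⟨-, h⟩; exact ⟨Set.mem_univ e, h⟩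
  have hmain : N.toMDigraph.Conn (Set.univ \ {e₀}) (N.leaf a) (N.leaf c) :=
    ((hwa.mono hsubF).trans (hww'.mono hsubB)).trans (hw'c.mono hsubF).symm
  -- edges not in A are edges of N'
  have hnotA : ∀ e, e ∉ Aset → e ∈ (N.inducedSub {x | x ≠ α}).edges := by
    intro e he
    obtain ⟨y, hy⟩ := N.exists_above_leaf (N.toMDigraph.tgt e)
    by_cases hyα : y = α
    · rw [hAset] at he
      simp only [Set.mem_setOf_eq, not_and, not_forall] at he
      obtain ⟨x, hx, hax⟩ := he (hyα ▸ hy)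
      exact ⟨x, hx, not_not.mp hax⟩
    · exact ⟨y, hyα, hy⟩
  have hsubNA : {e ∈ Set.univ \ {e₀} | ¬ e ∈ Aset} ⊆ F' := by
    rintro e ⟨⟨-, h1⟩, h2⟩
    exact ⟨hnotA e h2, h1⟩
  -- main extraction
  have getv : ∀ p q : X, ¬ N.toMDigraph.Conn F' (N.leaf p) (N.leaf q) →
      N.toMDigraph.Conn (Set.univ \ {e₀}) (N.leaf p) (N.leaf q) →
      ∃ v, N.toMDigraph.Conn Aset (N.leaf α) v ∧ N.toMDigraph.Conn F' v (N.leaf p) := by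
    intro p q hnc hconn
    rcases MDigraph.crossing (fun e => ¬ e ∈ Aset) hconn with
      h1 | ⟨w₁, w₂, e₁, h1, h2, h3, h4⟩
    · exact absurd (h1.mono hsubNA) hnc
    · have heA : e₁ ∈ Aset := not_not.mp h3
      have hprefix : N.toMDigraph.Conn F' (N.leaf p) w₁ := h1.mono hsubNA
      have hA1 : N.toMDigraph.Above (N.toMDigraph.tgt e₁) (N.leaf α) := heA.1
      have hA2 : ∀ x, x ≠ α → ¬ N.toMDigraph.Above (N.toMDigraph.tgt e₁) (N.leaf x) := heA.2
      have htail : N.toMDigraph.Conn Aset (N.toMDigraph.tgt e₁) (N.leaf α) := by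
        rw [hAset]; exact N.conn_A α hA1 hA2
      have hw₁A : N.toMDigraph.Conn Aset w₁ (N.leaf α) := by
        rcases h4 with ⟨h5, h6⟩ | ⟨h5, h6⟩
        · exact Relation.ReflTransGen.head ⟨e₁, heA, Or.inl ⟨h5, rfl⟩⟩ htail
        · exact h6 ▸ htail
      exact ⟨w₁, hw₁A.symm, hprefix.symm⟩
  exact ⟨getv a c hac hmain, getv c a (fun h => hac h.symm) hmain.symm⟩
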